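/- Under the linear potential outcome model with balanced randomization, the bias of the Horvitz–Thompson estimator is E[τ̂] − τ = (γ/n) Σ_{i=1}^n ( Cov[z_i, Σ_{j∈N_i} z_j] / Var[z_i] − d_i ). -/

import Mathlib

open MeasureTheory ProbabilityTheory

/-- Under the linear potential outcome model with balanced randomization, the bias of
the Horvitz–Thompson estimator is
`E[τ̂] − τ = (γ/n) ∑_i (Cov[z_i, ∑_{j∈N_i} z_j] / Var[z_i] − d_i)`. -/
theorem bias_HT_estimator {Ω : Type*} [MeasurableSpace Ω]
    (μ : Measure Ω) [IsProbabilityMeasure μ]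
    (n : ℕ) (hn : 0 < n)
    (N : Fin n → Finset (Fin n)) (d : Fin n → ℕ) (hd : ∀ i, d i = (N i).card)
    (α β : Fin n → ℝ) (γ : ℝ)
    (Y : (Fin n → ℝ) → Fin n → ℝ)
    (hY : ∀ z i, Y z i = α i + β i * z i + γ * ∑ j ∈ N i, z j)
    (z : Ω → Fin n → ℝ) (hmeas : Measurable z)
    (hval : ∀ ω i, z ω i = 0 ∨ z ω i = 1)
    (hE : ∀ i, ∫ ω, z ω i ∂μ = 1 / 2)
    (τ : ℝ) (hτ : τ = (1 / (n : ℝ)) * ∑ i, (β i + γ * (d i : ℝ)))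
    (τhat : Ω → ℝ)
    (hτhat : ∀ ω, τhat ω = (1 / (n : ℝ)) * ∑ i,
      (z ω i / (∫ ω', z ω' i ∂μ) - (1 - z ω i) / (∫ ω', (1 - z ω' i) ∂μ)) * Y (z ω) i) :
    (∫ ω, τhat ω ∂μ) - τ
      = (γ / (n : ℝ)) * ∑ i,
          (((∫ ω, z ω i * ∑ j ∈ N i, z ω j ∂μ)
              - (∫ ω, z ω i ∂μ) * (∫ ω, (∑ j ∈ N i, z ω j) ∂μ))
            / ProbabilityTheory.variance (fun ω => z ω i) μ
            - (d i : ℝ)) := by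
  have hz_meas : ∀ i, Measurable fun ω => z ω i := fun i =>
    (measurable_pi_apply i).comp hmeas
  have hz_mem : ∀ ω i, z ω i ∈ Set.Icc (0:ℝ) 1 := by
    intro ω i; rcases hval ω i with h | h <;> simp [h]
  have hz_int : ∀ i, Integrable (fun ω => z ω i) μ := by
    intro i
    refine Integrable.mono' (integrable_const 1) (hz_meas i).aestronglyMeasurable ?_
    filter_upwards with ω
    rcases hval ω i with h | h <;> simp [h]
  have hzz_int : ∀ i j, Integrable (fun ω => z ω i * z ω j) μ := by
    intro i j
    refine Integrable.mono' (integrable_const 1)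
      ((hz_meas i).mul (hz_meas j)).aestronglyMeasurable ?_
    filter_upwards with ω
    rcases hval ω i with h | h <;> rcases hval ω j with h' | h' <;> simp [h, h']
  have hS_int : ∀ i, Integrable (fun ω => ∑ j ∈ N i, z ω j) μ := fun i =>
    integrable_finset_sum _ (fun j _ => hz_int j)
  have hzS_int : ∀ i, Integrable (fun ω => z ω i * ∑ j ∈ N i, z ω j) μ := by
    intro i
    have : (fun ω => z ω i * ∑ j ∈ N i, z ω j)
        = fun ω => ∑ j ∈ N i, z ω i * z ω j := by
      funext ω; rw [Finset.mul_sum]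
    rw [this]
    exact integrable_finset_sum _ (fun j _ => hzz_int i j)
  have h1mz : ∀ i, ∫ ω, (1 - z ω i) ∂μ = 1 / 2 := by
    intro i
    rw [integral_sub (integrable_const 1) (hz_int i), hE i]
    simp
    norm_num
  have hB : ∀ i, ∫ ω, (∑ j ∈ N i, z ω j) ∂μ = (d i : ℝ) / 2 := by
    intro i
    rw [integral_finset_sum _ (fun j _ => hz_int j)]
    simp only [hE]
    rw [Finset.sum_const, hd i]
    push_cast; ring
  have hvar : ∀ i, variance (fun ω => z ω i) μ = 1 / 4 := by
    intro i
    have hmem : MemLp (fun ω => z ω i) 2 μ :=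
      memLp_of_bounded (Filter.Eventually.of_forall (fun ω => hz_mem ω i))
        (hz_meas i).aestronglyMeasurable 2
    rw [variance_eq_sub hmem]
    have hsq : ∫ ω, ((fun ω => z ω i) ^ 2) ω ∂μ = 1 / 2 := by
      have : ∀ ω, ((fun ω => z ω i) ^ 2) ω = z ω i := by
        intro ω; rcases hval ω i with h | h <;> simp [h]
      rw [integral_congr_ae (Filter.Eventually.of_forall this), hE i]
    rw [hsq, hE i]
    norm_num
  -- pointwise expansion of the summand in τhat
  have hpt : ∀ i ω,
      (z ω i / (∫ ω', z ω' i ∂μ) - (1 - z ω i) / (∫ ω', (1 - z ω' i) ∂μ)) * Y (z ω) i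
        = (4 * α i + 2 * β i) * z ω i
          + (4 * γ) * (z ω i * ∑ j ∈ N i, z ω j)
          + (-2 * α i) + (-2 * γ) * ∑ j ∈ N i, z ω j := by
    intro i ω
    rw [hE i, h1mz i, hY (z ω) i]
    rcases hval ω i with h | h <;> rw [h] <;> ring
  have hint : ∀ i, ∫ ω,
      ((4 * α i + 2 * β i) * z ω i
        + (4 * γ) * (z ω i * ∑ j ∈ N i, z ω j)
        + (-2 * α i) + (-2 * γ) * ∑ j ∈ N i, z ω j) ∂μ
      = β i + 4 * γ * (∫ ω, z ω i * ∑ j ∈ N i, z ω j ∂μ)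
          - 2 * γ * (∫ ω, (∑ j ∈ N i, z ω j) ∂μ) := by
    intro i
    have hI1 : Integrable (fun ω => (4 * α i + 2 * β i) * z ω i
        + 4 * γ * (z ω i * ∑ j ∈ N i, z ω j)) μ :=
      ((hz_int i).const_mul _).add ((hzS_int i).const_mul _)
    have hI2 : Integrable (fun ω => (4 * α i + 2 * β i) * z ω i
        + 4 * γ * (z ω i * ∑ j ∈ N i, z ω j) + -2 * α i) μ :=
      hI1.add (integrable_const _)
    rw [integral_add hI2 ((hS_int i).const_mul (-2 * γ)),
      integral_add hI1 (integrable_const (-2 * α i)),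
      integral_add ((hz_int i).const_mul (4 * α i + 2 * β i))
        ((hzS_int i).const_mul (4 * γ)),
      integral_const_mul, integral_const_mul, integral_const_mul, integral_const_mul, hE i]
    simp only [integral_const, measure_univ, probReal_univ, ENNReal.toReal_one, smul_eq_mul, one_mul]
    ring
  have hτhat' : ∫ ω, τhat ω ∂μ
      = (1 / (n : ℝ)) * ∑ i,
          (β i + 4 * γ * (∫ ω, z ω i * ∑ j ∈ N i, z ω j ∂μ)
            - 2 * γ * (∫ ω, (∑ j ∈ N i, z ω j) ∂μ)) := by
    have : ∀ ω, τhat ω = (1 / (n : ℝ)) * ∑ i,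
        ((4 * α i + 2 * β i) * z ω i
          + (4 * γ) * (z ω i * ∑ j ∈ N i, z ω j)
          + (-2 * α i) + (-2 * γ) * ∑ j ∈ N i, z ω j) := by
      intro ω
      rw [hτhat ω]
      congr 1
      exact Finset.sum_congr rfl fun i _ => hpt i ω
    rw [integral_congr_ae (Filter.Eventually.of_forall this), integral_const_mul,
      integral_finset_sum _ (fun i _ =>
        show Integrable (fun ω => (4 * α i + 2 * β i) * z ω i
            + 4 * γ * (z ω i * ∑ j ∈ N i, z ω j) + -2 * α i
            + -2 * γ * ∑ j ∈ N i, z ω j) μ from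
          ((((hz_int i).const_mul _).add
            ((hzS_int i).const_mul _)).add (integrable_const _)).add
            ((hS_int i).const_mul _))]
    congr 1
    exact Finset.sum_congr rfl fun i _ => hint i
  rw [hτhat', hτ, ← mul_sub, ← Finset.sum_sub_distrib]
  have : ∀ i : Fin n,
      (β i + 4 * γ * (∫ ω, z ω i * ∑ j ∈ N i, z ω j ∂μ)
        - 2 * γ * (∫ ω, (∑ j ∈ N i, z ω j) ∂μ)) - (β i + γ * (d i : ℝ))
      = γ * (((∫ ω, z ω i * ∑ j ∈ N i, z ω j ∂μ)
              - (∫ ω, z ω i ∂μ) * (∫ ω, (∑ j ∈ N i, z ω j) ∂μ))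
            / ProbabilityTheory.variance (fun ω => z ω i) μ
            - (d i : ℝ)) := by
    intro i
    rw [hvar i, hE i]
    ring
  rw [Finset.sum_congr rfl fun i _ => this i, ← Finset.mul_sum]
  ring
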